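/- Dememorization identity (diffusion / memory term). Let d and M be positive integers, ã ∈ ℝᵈ a constant vector, β₁, …, β_M ∈ ℝ, and for each i let κᵢ : ℝᵈ → ℝ^{d×d} be a continuously differentiable matrix-valued function. Let u : ℝᵈ × ℝ → ℝ be twice continuously differentiable, and define vᵢ(x,t) := ∫₀ᵗ e^{−βᵢ(t−s)} u(x − (t−s)ã, s) ds for i = 1, …, M. Then for every x ∈ ℝᵈ and t ∈ ℝ, Σᵢ₌₁ᴹ ∇ₓ·(κᵢ(x) ∇ₓ vᵢ(x,t)) = ∫₀ᵗ ∇ₓ·( A(x,t,s) (∇u)(x − (t−s)ã, s) ) ds, where A(x,t,s) := Σᵢ₌₁ᴹ κᵢ(x) e^{−βᵢ(t−s)}. Consequently, u satisfies the memory equation uₜ + a·∇u = ∫₀ᵗ ∇·(A(x,t,s)∇u(x̃(x,t,s),s)) ds (with x̃(x,t,s) = x − (t−s)ã) if and only if uₜ + a·∇u = Σᵢ₌₁ᴹ ∇·(κᵢ ∇vᵢ). -/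

import Mathlib

open MeasureTheory

/-- The gradient (vector of partial derivatives) of a scalar function on `ℝᵈ`. -/
noncomputable def gradVec (d : ℕ) (f : (Fin d → ℝ) → ℝ) (x : Fin d → ℝ) : Fin d → ℝ :=
  fun i => fderiv ℝ f x (Pi.single i 1)

/-- The divergence of a vector field on `ℝᵈ`. -/
noncomputable def divVec (d : ℕ) (F : (Fin d → ℝ) → (Fin d → ℝ)) (x : Fin d → ℝ) : ℝ :=
  ∑ i, fderiv ℝ F x (Pi.single i 1) i

section Aux

variable {d : ℕ}

/-- The space-slice of a jointly `C¹` function is differentiable, with derivative obtained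
from the joint derivative by composing with the inclusion `z ↦ (z, 0)`. -/
lemma slice_hasFDerivAt {f : (Fin d → ℝ) → ℝ → ℝ}
    (hf : ContDiff ℝ 1 fun p : (Fin d → ℝ) × ℝ => f p.1 p.2) (y : Fin d → ℝ) (s : ℝ) :
    HasFDerivAt (fun z => f z s)
      ((fderiv ℝ (fun p : (Fin d → ℝ) × ℝ => f p.1 p.2) (y, s)).comp
        (ContinuousLinearMap.inl ℝ (Fin d → ℝ) ℝ)) y := by
  have h := ((hf.differentiable one_ne_zero (y, s)).hasFDerivAt).comp y (hasFDerivAt_prodMk_left (𝕜 := ℝ) y s)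
  exact h

lemma slice_cont {f : (Fin d → ℝ) → ℝ → ℝ}
    (hf : ContDiff ℝ 1 fun p : (Fin d → ℝ) × ℝ => f p.1 p.2) :
    Continuous fun p : (Fin d → ℝ) × ℝ =>
      (fderiv ℝ (fun p : (Fin d → ℝ) × ℝ => f p.1 p.2) p).comp
        (ContinuousLinearMap.inl ℝ (Fin d → ℝ) ℝ) :=
  (hf.continuous_fderiv one_ne_zero).clm_comp continuous_const

/-- Differentiation under the interval integral sign for a jointly `C¹` integrand. -/
lemma dui {f : (Fin d → ℝ) → ℝ → ℝ}
    (hf : ContDiff ℝ 1 fun p : (Fin d → ℝ) × ℝ => f p.1 p.2) (t : ℝ) (x : Fin d → ℝ) :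
    HasFDerivAt (fun y => ∫ s in (0:ℝ)..t, f y s)
      (∫ s in (0:ℝ)..t, (fderiv ℝ (fun p : (Fin d → ℝ) × ℝ => f p.1 p.2) (x, s)).comp
        (ContinuousLinearMap.inl ℝ (Fin d → ℝ) ℝ)) x := by
  obtain ⟨K, hK⟩ :=
    ((isCompact_closedBall x 1).prod (isCompact_uIcc (a := (0:ℝ)) (b := t))).exists_bound_of_continuousOn
      (slice_cont hf).continuousOn
  exact intervalIntegral.hasFDerivAt_integral_of_dominated_of_fderiv_le
    (F' := fun y s => (fderiv ℝ (fun p : (Fin d → ℝ) × ℝ => f p.1 p.2) (y, s)).comp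
        (ContinuousLinearMap.inl ℝ (Fin d → ℝ) ℝ))
    (bound := fun _ => K) (Metric.ball_mem_nhds x one_pos)
    (Filter.Eventually.of_forall fun y =>
      ((hf.continuous.comp (Continuous.prodMk_right y))).aestronglyMeasurable)
    ((hf.continuous.comp (Continuous.prodMk_right x)).intervalIntegrable _ _)
    (((slice_cont hf).comp (Continuous.prodMk_right x)).aestronglyMeasurable)
    (Filter.Eventually.of_forall fun s hs y hy =>
      hK (y, s) ⟨Metric.ball_subset_closedBall hy, Set.uIoc_subset_uIcc hs⟩)
    intervalIntegrable_const
    (Filter.Eventually.of_forall fun s _ y _ => slice_hasFDerivAt hf y s)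

/-- The `k`-th spatial partial derivative of `u`, as a jointly defined function. -/
noncomputable def gk (d : ℕ) (u : (Fin d → ℝ) → ℝ → ℝ) (k : Fin d)
    (p : (Fin d → ℝ) × ℝ) : ℝ :=
  gradVec d (fun z => u z p.2) p.1 k

lemma gk_contDiff {u : (Fin d → ℝ) → ℝ → ℝ}
    (hu : ContDiff ℝ 2 fun p : (Fin d → ℝ) × ℝ => u p.1 p.2) (k : Fin d) :
    ContDiff ℝ 1 (gk d u k) := by
  have h : gk d u k = fun p : (Fin d → ℝ) × ℝ =>
      fderiv ℝ (fun p : (Fin d → ℝ) × ℝ => u p.1 p.2) p (Pi.single k 1, 0) := by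
    funext p
    rw [gk, gradVec, (slice_hasFDerivAt (hu.of_le one_le_two) p.1 p.2).fderiv]
    rfl
  rw [h]
  exact (hu.fderiv_right (by norm_num)).clm_apply contDiff_const

/-- Integrand of the auxiliary variable `vᵢ`. -/
noncomputable def ffun (d : ℕ) (u : (Fin d → ℝ) → ℝ → ℝ) (a' : Fin d → ℝ) (βi t : ℝ)
    (y : Fin d → ℝ) (s : ℝ) : ℝ :=
  Real.exp (-βi * (t - s)) * u (y - (t - s) • a') s

/-- Integrand of the `j`-th component of the flux `κᵢ∇vᵢ`. -/
noncomputable def gfun (d : ℕ) (u : (Fin d → ℝ) → ℝ → ℝ) (a' : Fin d → ℝ)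
    (κi : (Fin d → ℝ) → Fin d → Fin d → ℝ) (βi t : ℝ) (j : Fin d)
    (y : Fin d → ℝ) (s : ℝ) : ℝ :=
  ∑ k, κi y j k * (Real.exp (-βi * (t - s)) * gk d u k (y - (t - s) • a', s))

lemma phi_contDiff (a' : Fin d → ℝ) (t : ℝ) :
    ContDiff ℝ 2 fun p : (Fin d → ℝ) × ℝ => ((p.1 - (t - p.2) • a', p.2) : (Fin d → ℝ) × ℝ) :=
  (contDiff_fst.sub (((contDiff_const.sub contDiff_snd)).smul contDiff_const)).prodMk contDiff_snd

lemma exp_contDiff (βi t : ℝ) :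
    ContDiff ℝ 2 fun p : (Fin d → ℝ) × ℝ => Real.exp (-βi * (t - p.2)) :=
  (Real.contDiff_exp.of_le le_top).comp (contDiff_const.mul (contDiff_const.sub contDiff_snd))

lemma ffun_contDiff {u : (Fin d → ℝ) → ℝ → ℝ}
    (hu : ContDiff ℝ 2 fun p : (Fin d → ℝ) × ℝ => u p.1 p.2) (a' : Fin d → ℝ) (βi t : ℝ) :
    ContDiff ℝ 1 fun p : (Fin d → ℝ) × ℝ => ffun d u a' βi t p.1 p.2 := by
  refine ContDiff.of_le ?_ one_le_two
  exact (exp_contDiff βi t).mul (hu.comp (phi_contDiff a' t))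

lemma gfun_contDiff {u : (Fin d → ℝ) → ℝ → ℝ}
    (hu : ContDiff ℝ 2 fun p : (Fin d → ℝ) × ℝ => u p.1 p.2) (a' : Fin d → ℝ)
    {κi : (Fin d → ℝ) → Fin d → Fin d → ℝ} (hκi : ∀ j k, ContDiff ℝ 1 fun x => κi x j k)
    (βi t : ℝ) (j : Fin d) :
    ContDiff ℝ 1 fun p : (Fin d → ℝ) × ℝ => gfun d u a' κi βi t j p.1 p.2 := by
  apply ContDiff.sum
  intro k _
  exact ((hκi j k).comp contDiff_fst).mul
    (((exp_contDiff βi t).of_le one_le_two).mul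
      ((gk_contDiff hu k).comp ((phi_contDiff a' t).of_le one_le_two)))

end Aux

/-- Dememorization identity for the diffusion/memory term: with
`vᵢ(x,t) = ∫₀ᵗ e^{-βᵢ(t-s)} u(x-(t-s)ã, s) ds` one has
`Σᵢ ∇·(κᵢ(x)∇vᵢ(x,t)) = ∫₀ᵗ ∇·(A(x,t,s)(∇u)(x-(t-s)ã, s)) ds` where
`A(x,t,s) = Σᵢ κᵢ(x)e^{-βᵢ(t-s)}`; consequently, `u` satisfies the memory
equation iff it satisfies the dememorized equation. -/
theorem dememorization_diffusion_identity
    (d M : ℕ) (hd : 0 < d) (hM : 0 < M)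
    (a' a : Fin d → ℝ) (β : Fin M → ℝ)
    (κ : Fin M → (Fin d → ℝ) → Fin d → Fin d → ℝ)
    (hκ : ∀ i j k, ContDiff ℝ 1 (fun x => κ i x j k))
    (u : (Fin d → ℝ) → ℝ → ℝ)
    (hu : ContDiff ℝ 2 (fun p : (Fin d → ℝ) × ℝ => u p.1 p.2))
    (v : Fin M → (Fin d → ℝ) → ℝ → ℝ)
    (hv : ∀ i x t, v i x t =
      ∫ s in (0 : ℝ)..t, Real.exp (-β i * (t - s)) * u (x - (t - s) • a') s) :
    (∀ (x : Fin d → ℝ) (t : ℝ),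
      ∑ i, divVec d (fun y j => ∑ k, κ i y j k * gradVec d (fun z => v i z t) y k) x
        = ∫ s in (0 : ℝ)..t,
            divVec d (fun y j => ∑ k, (∑ i, Real.exp (-β i * (t - s)) * κ i y j k) *
              gradVec d (fun z => u z s) (y - (t - s) • a') k) x) ∧
    (∀ (x : Fin d → ℝ) (t : ℝ),
      (deriv (u x) t + ∑ j, a j * gradVec d (fun z => u z t) x j
          = ∫ s in (0 : ℝ)..t,
              divVec d (fun y j => ∑ k, (∑ i, Real.exp (-β i * (t - s)) * κ i y j k) *
                gradVec d (fun z => u z s) (y - (t - s) • a') k) x)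
        ↔ (deriv (u x) t + ∑ j, a j * gradVec d (fun z => u z t) x j
          = ∑ i, divVec d
              (fun y j => ∑ k, κ i y j k * gradVec d (fun z => v i z t) y k) x)) := by
  have key : ∀ (x : Fin d → ℝ) (t : ℝ),
      ∑ i, divVec d (fun y j => ∑ k, κ i y j k * gradVec d (fun z => v i z t) y k) x
        = ∫ s in (0 : ℝ)..t,
            divVec d (fun y j => ∑ k, (∑ i, Real.exp (-β i * (t - s)) * κ i y j k) *
              gradVec d (fun z => u z s) (y - (t - s) • a') k) x := by
    intro x t
    have hf1 : ∀ i : Fin M, ContDiff ℝ 1 fun p : (Fin d → ℝ) × ℝ => ffun d u a' (β i) t p.1 p.2 :=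
      fun i => ffun_contDiff hu a' (β i) t
    have hg1 : ∀ (i : Fin M) (j : Fin d),
        ContDiff ℝ 1 fun p : (Fin d → ℝ) × ℝ => gfun d u a' (κ i) (β i) t j p.1 p.2 :=
      fun i j => gfun_contDiff hu a' (fun j k => hκ i j k) (β i) t j
    -- continuity of the integrand of `∂ₖ vᵢ`
    have hc : ∀ (i : Fin M) (k : Fin d) (y : Fin d → ℝ),
        Continuous fun s : ℝ => Real.exp (-β i * (t - s)) * gk d u k (y - (t - s) • a', s) := by
      intro i k y
      have h1 : Continuous fun s : ℝ => Real.exp (-β i * (t - s)) :=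
        Real.continuous_exp.comp (continuous_const.mul (continuous_const.sub continuous_id))
      have h2 : Continuous fun s : ℝ => ((y - (t - s) • a', s) : (Fin d → ℝ) × ℝ) :=
        (continuous_const.sub ((continuous_const.sub continuous_id).smul
          continuous_const)).prodMk continuous_id
      exact h1.mul ((gk_contDiff hu k).continuous.comp h2)
    -- Step A : the gradient of `vᵢ`
    have gradv : ∀ (i : Fin M) (y : Fin d → ℝ) (k : Fin d),
        gradVec d (fun z => v i z t) y k
          = ∫ s in (0:ℝ)..t, Real.exp (-β i * (t - s)) * gk d u k (y - (t - s) • a', s) := by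
      intro i y k
      have hfun : (fun z => v i z t) = fun z => ∫ s in (0:ℝ)..t, ffun d u a' (β i) t z s :=
        funext fun z => hv i z t
      have hφ : IntervalIntegrable (fun s : ℝ =>
          (fderiv ℝ (fun p : (Fin d → ℝ) × ℝ => ffun d u a' (β i) t p.1 p.2) (y, s)).comp
            (ContinuousLinearMap.inl ℝ (Fin d → ℝ) ℝ)) volume 0 t :=
        ((slice_cont (hf1 i)).comp (Continuous.prodMk_right y)).intervalIntegrable _ _
      rw [gradVec, hfun, (dui (hf1 i) t y).fderiv,
        ContinuousLinearMap.intervalIntegral_apply hφ]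
      refine intervalIntegral.integral_congr fun s _ => ?_
      have hD : HasFDerivAt (fun z => ffun d u a' (β i) t z s)
          (Real.exp (-β i * (t - s)) • fderiv ℝ (fun z => u z s) (y - (t - s) • a')) y := by
        have h1 : HasFDerivAt (fun z => u z s)
            (fderiv ℝ (fun z => u z s) (y - (t - s) • a')) (y - (t - s) • a') :=
          (slice_hasFDerivAt (hu.of_le one_le_two)
            (y - (t - s) • a') s).differentiableAt.hasFDerivAt
        have h2 := h1.comp y ((hasFDerivAt_id y).sub_const ((t - s) • a'))
        rw [ContinuousLinearMap.comp_id] at h2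
        exact h2.const_mul _
      rw [(slice_hasFDerivAt (hf1 i) y s).unique hD]
      simp [gk, gradVec]
    -- Step B : the flux field `κᵢ∇vᵢ` as an interval integral
    have fieldeq : ∀ i : Fin M,
        (fun (y : Fin d → ℝ) (j : Fin d) =>
            ∑ k, κ i y j k * gradVec d (fun z => v i z t) y k)
          = fun y j => ∫ s in (0:ℝ)..t, gfun d u a' (κ i) (β i) t j y s := by
      intro i
      funext y j
      simp only [gradv]
      rw [show (∫ s in (0:ℝ)..t, gfun d u a' (κ i) (β i) t j y s)
          = ∫ s in (0:ℝ)..t, ∑ k, κ i y j k *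
              (Real.exp (-β i * (t - s)) * gk d u k (y - (t - s) • a', s)) from rfl,
        intervalIntegral.integral_finset_sum
          (fun k _ => ((hc i k y).intervalIntegrable _ _).const_mul _)]
      exact Finset.sum_congr rfl fun k _ => (intervalIntegral.integral_const_mul _ _).symm
    -- continuity of the "partial derivative of flux integrand" families
    have hDgc : ∀ (i : Fin M) (j : Fin d), Continuous fun s : ℝ =>
        (fderiv ℝ (fun p : (Fin d → ℝ) × ℝ => gfun d u a' (κ i) (β i) t j p.1 p.2) (x, s)).comp
          (ContinuousLinearMap.inl ℝ (Fin d → ℝ) ℝ) :=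
      fun i j => (slice_cont (hg1 i j)).comp (Continuous.prodMk_right x)
    have hint : ∀ (i : Fin M) (j : Fin d), IntervalIntegrable (fun s : ℝ =>
        ((fderiv ℝ (fun p : (Fin d → ℝ) × ℝ => gfun d u a' (κ i) (β i) t j p.1 p.2) (x, s)).comp
          (ContinuousLinearMap.inl ℝ (Fin d → ℝ) ℝ)) (Pi.single j 1)) volume 0 t :=
      fun i j => ((hDgc i j).clm_apply continuous_const).intervalIntegrable _ _
    -- Step C : divergence of each flux field
    have divint : ∀ i : Fin M,
        divVec d (fun y j => ∫ s in (0:ℝ)..t, gfun d u a' (κ i) (β i) t j y s) x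
          = ∑ j, ∫ s in (0:ℝ)..t,
              ((fderiv ℝ (fun p : (Fin d → ℝ) × ℝ =>
                  gfun d u a' (κ i) (β i) t j p.1 p.2) (x, s)).comp
                (ContinuousLinearMap.inl ℝ (Fin d → ℝ) ℝ)) (Pi.single j 1) := by
      intro i
      simp only [divVec]
      refine Finset.sum_congr rfl fun j _ => ?_
      rw [fderiv_pi (fun j' => (dui (hg1 i j') t x).differentiableAt)]
      simp only [ContinuousLinearMap.pi_apply]
      rw [(dui (hg1 i j) t x).fderiv,
        ContinuousLinearMap.intervalIntegral_apply ((hDgc i j).intervalIntegrable _ _)]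
    -- Step D : the divergence on the right-hand side, for each `s`
    have divR : ∀ s : ℝ,
        divVec d (fun y j => ∑ k, (∑ i, Real.exp (-β i * (t - s)) * κ i y j k) *
            gradVec d (fun z => u z s) (y - (t - s) • a') k) x
          = ∑ j, ∑ i, ((fderiv ℝ (fun p : (Fin d → ℝ) × ℝ =>
              gfun d u a' (κ i) (β i) t j p.1 p.2) (x, s)).comp
                (ContinuousLinearMap.inl ℝ (Fin d → ℝ) ℝ)) (Pi.single j 1) := by
      intro s
      have hfe : (fun (y : Fin d → ℝ) (j : Fin d) =>
          ∑ k, (∑ i, Real.exp (-β i * (t - s)) * κ i y j k) *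
            gradVec d (fun z => u z s) (y - (t - s) • a') k)
          = fun y j => ∑ i, gfun d u a' (κ i) (β i) t j y s := by
        funext y j
        simp only [gfun, gk, Finset.sum_mul]
        rw [Finset.sum_comm]
        exact Finset.sum_congr rfl fun i _ => Finset.sum_congr rfl fun k _ => by ring
      rw [hfe]
      simp only [divVec]
      refine Finset.sum_congr rfl fun j _ => ?_
      rw [fderiv_pi (fun j' => DifferentiableAt.fun_sum fun i _ =>
        (slice_hasFDerivAt (hg1 i j') x s).differentiableAt)]
      simp only [ContinuousLinearMap.pi_apply]
      rw [fderiv_fun_sum (fun i _ => (slice_hasFDerivAt (hg1 i j) x s).differentiableAt)]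
      simp only [ContinuousLinearMap.sum_apply]
      exact Finset.sum_congr rfl fun i _ => by
        rw [(slice_hasFDerivAt (hg1 i j) x s).fderiv]
    -- assemble
    calc
      (∑ i, divVec d (fun y j => ∑ k, κ i y j k * gradVec d (fun z => v i z t) y k) x)
          = ∑ i : Fin M, ∑ j : Fin d, ∫ s in (0:ℝ)..t,
              ((fderiv ℝ (fun p : (Fin d → ℝ) × ℝ =>
                  gfun d u a' (κ i) (β i) t j p.1 p.2) (x, s)).comp
                (ContinuousLinearMap.inl ℝ (Fin d → ℝ) ℝ)) (Pi.single j 1) := by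
            refine Finset.sum_congr rfl fun i _ => ?_
            rw [fieldeq i]; exact divint i
      _ = ∑ i : Fin M, ∫ s in (0:ℝ)..t, ∑ j : Fin d,
              ((fderiv ℝ (fun p : (Fin d → ℝ) × ℝ =>
                  gfun d u a' (κ i) (β i) t j p.1 p.2) (x, s)).comp
                (ContinuousLinearMap.inl ℝ (Fin d → ℝ) ℝ)) (Pi.single j 1) :=
            Finset.sum_congr rfl fun i _ =>
              (intervalIntegral.integral_finset_sum fun j _ => hint i j).symm
      _ = ∫ s in (0:ℝ)..t, ∑ i : Fin M, ∑ j : Fin d,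
              ((fderiv ℝ (fun p : (Fin d → ℝ) × ℝ =>
                  gfun d u a' (κ i) (β i) t j p.1 p.2) (x, s)).comp
                (ContinuousLinearMap.inl ℝ (Fin d → ℝ) ℝ)) (Pi.single j 1) :=
            (intervalIntegral.integral_finset_sum fun i _ =>
              ((continuous_finset_sum _ fun j _ =>
                (hDgc i j).clm_apply continuous_const).intervalIntegrable _ _)).symm
      _ = ∫ s in (0:ℝ)..t,
            divVec d (fun y j => ∑ k, (∑ i, Real.exp (-β i * (t - s)) * κ i y j k) *
              gradVec d (fun z => u z s) (y - (t - s) • a') k) x :=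
            intervalIntegral.integral_congr fun s _ => by
              rw [divR s, Finset.sum_comm]
  exact ⟨key, fun x t => ⟨fun h => h.trans (key x t).symm, fun h => h.trans (key x t)⟩⟩
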